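/- Let t₁ and t₂ be constant-free terms of type F over variables z₁,…,z_n and z₁,…,z_m respectively, in which the variables occur (reading the leaves of the term tree left to right) exactly in the order z₁, z₂, …, z_n (resp. z₁, …, z_m). If t₁(a₁,…,a_n) = t₂(b₁,…,b_m) as terms, for some a₁,…,a_n, b₁,…,b_m drawn from X ∪ F₀ (variables or constant symbols), then n = m, t₁ = t₂ as terms, and (a₁,…,a_n) = (b₁,…,b_m). -/

import Mathlib

structure Signature where
  F : Type
  ar : F → ℕ

structure OAlg (S : Signature) where
  carrier : Type
  ops : ∀ f : S.F, (Fin (S.ar f) → carrier) → carrier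
  le : carrier → carrier → Prop
  le_refl : ∀ a, le a a
  le_trans : ∀ a b c, le a b → le b c → le a c
  le_antisymm : ∀ a b, le a b → le b a → a = b
  mono : ∀ (f : S.F) (a b : Fin (S.ar f) → carrier),
    (∀ i, le (a i) (b i)) → le (ops f a) (ops f b)

structure OHom {S : Signature} (A B : OAlg S) where
  toFun : A.carrier → B.carrier
  map_ops : ∀ (f : S.F) (a : Fin (S.ar f) → A.carrier),
    toFun (A.ops f a) = B.ops f (fun i => toFun (a i))
  mono : ∀ x y, A.le x y → B.le (toFun x) (toFun y)

/-- Terms of type `S` over a set `X` of variables. Constants are the nullary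
operation symbols. -/
inductive Term (S : Signature) (X : Type) : Type
  | var : X → Term S X
  | op : (f : S.F) → (Fin (S.ar f) → Term S X) → Term S X

/-- The sequence of variables of a term, read left to right on the leaves of its tree. -/
def varList {S : Signature} {X : Type} : Term S X → List X
  | .var x => [x]
  | .op _ a => (List.ofFn (fun i => varList (a i))).flatten

/-- A term is constant free if no nullary operation symbol occurs in it. -/
def ConstFree {S : Signature} {X : Type} : Term S X → Prop
  | .var _ => True
  | .op f a => S.ar f ≠ 0 ∧ ∀ i, ConstFree (a i)

/-- Substitution of terms for the variables `z₀, z₁, z₂, …`. -/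
def subst {S : Signature} {X : Type} (σ : ℕ → Term S X) : Term S ℕ → Term S X
  | .var n => σ n
  | .op f a => .op f (fun i => subst σ (a i))

/-- A term is a leaf if it is a variable or a constant symbol. -/
def IsLeaf {S : Signature} {X : Type} : Term S X → Prop
  | .var _ => True
  | .op f _ => S.ar f = 0

/-- The number of leaves of the tree of a term. -/
def leafCount {S : Signature} {X : Type} : Term S X → ℕ
  | .var _ => 1
  | .op f a => if S.ar f = 0 then 1 else (List.ofFn (fun i => leafCount (a i))).sum

/-- The number of occurrences of non-nullary operation symbols in a term. -/
def opCount {S : Signature} {X : Type} : Term S X → ℕ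
  | .var _ => 0
  | .op f a => (if S.ar f = 0 then 0 else 1) + (List.ofFn (fun i => opCount (a i))).sum

/-- If `t₁`, `t₂` are constant-free regular terms (their left-to-right variable
sequences are exactly `z₀, …, z_{n-1}` resp. `z₀, …, z_{m-1}`), and substituting
leaves (variables or constant symbols) `a₀,…` into `t₁` and `b₀,…` into `t₂`
yields the same term, then `n = m`, `t₁ = t₂`, and the substituted leaves agree. -/
lemma flatten_eq_aux {α : Type*} : ∀ (l₁ l₂ : List (List α)),
    l₁.length = l₂.length →
    (∀ i (h : i < l₁.length) (h' : i < l₂.length), (l₁[i]).length = (l₂[i]).length) →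
    l₁.flatten = l₂.flatten → l₁ = l₂
  | [], [], _, _, _ => rfl
  | [], _ :: _, hl, _, _ => by simp at hl
  | _ :: _, [], hl, _, _ => by simp at hl
  | x :: xs, y :: ys, hl, hlen, hfl => by
    have h0 := hlen 0 (by simp) (by simp)
    simp only [List.flatten_cons] at hfl
    obtain ⟨h1, h2⟩ := List.append_inj hfl (by simpa using h0)
    have := flatten_eq_aux xs ys (by simpa using hl)
      (fun i h h' => hlen (i+1) (by simpa using h) (by simpa using h')) h2
    simp [h1, this]

lemma key {S : Signature} {X : Type} (a b : ℕ → Term S X)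
    (ha : ∀ i, IsLeaf (a i)) (hb : ∀ i, IsLeaf (b i)) :
    ∀ (t₁ t₂ : Term S ℕ), ConstFree t₁ → ConstFree t₂ →
    subst a t₁ = subst b t₂ →
    (varList t₁).map a = (varList t₂).map b ∧ (varList t₁ = varList t₂ → t₁ = t₂)
  | .var i, .var j, _, _, h => by
      simp only [subst] at h
      refine ⟨by simp [varList, h], fun hv => ?_⟩
      simp only [varList, List.cons.injEq] at hv
      simp [hv.1]
  | .var i, .op g v, _, h₂, h => by
      exfalso
      simp only [subst] at h
      have hl := ha i
      cases hai : a i with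
      | var x => rw [hai] at h; cases h
      | op f w =>
        rw [hai] at h
        rw [hai] at hl
        injection h with hfg _
        exact h₂.1 (hfg ▸ hl)
  | .op f u, .var j, h₁, _, h => by
      exfalso
      simp only [subst] at h
      have hl := hb j
      cases hbj : b j with
      | var x => rw [hbj] at h; cases h
      | op g w =>
        rw [hbj] at h
        rw [hbj] at hl
        injection h with hfg _
        exact h₁.1 (by rw [hfg]; exact hl)
  | .op f u, .op g v, h₁, h₂, h => by
      simp only [subst] at h
      injection h with hfg hargs
      subst hfg
      have hargs' : (fun i => subst a (u i)) = fun i => subst b (v i) := eq_of_heq hargs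
      have IH : ∀ i, (varList (u i)).map a = (varList (v i)).map b ∧
          (varList (u i) = varList (v i) → u i = v i) :=
        fun i => key a b ha hb (u i) (v i) (h₁.2 i) (h₂.2 i) (congrFun hargs' i)
      constructor
      · simp only [varList, List.map_flatten, List.map_ofFn]
        congr 1
        exact congrArg List.ofFn (funext fun i => (IH i).1)
      · intro hv
        simp only [varList] at hv
        have hlists : (List.ofFn fun i => varList (u i)) = List.ofFn fun i => varList (v i) := by
          refine flatten_eq_aux _ _ (by simp) ?_ hv
          intro i h h'
          simp only [List.length_ofFn] at h h'
          simp only [List.getElem_ofFn]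
          have := congrArg List.length (IH ⟨i, h⟩).1
          simpa using this
        have huv : ∀ i, varList (u i) = varList (v i) := by
          intro i
          have := congrFun (List.ofFn_injective hlists) i
          exact this
        exact congrArg (Term.op f) (funext fun i => (IH i).2 (huv i))

theorem regular_term_rewriting {S : Signature} {X : Type} (t₁ t₂ : Term S ℕ) (n m : ℕ)
    (h₁ : ConstFree t₁) (h₂ : ConstFree t₂)
    (hv₁ : varList t₁ = List.range n) (hv₂ : varList t₂ = List.range m)
    (a b : ℕ → Term S X)
    (ha : ∀ i, IsLeaf (a i)) (hb : ∀ i, IsLeaf (b i))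
    (heq : subst a t₁ = subst b t₂) :
    n = m ∧ t₁ = t₂ ∧ ∀ i < n, a i = b i := by
  obtain ⟨hmap, hteq⟩ := key a b ha hb t₁ t₂ h₁ h₂ heq
  have hnm : n = m := by
    have := congrArg List.length hmap
    simpa [hv₁, hv₂] using this
  refine ⟨hnm, hteq (by rw [hv₁, hv₂, hnm]), fun i hi => ?_⟩
  rw [hv₁, hv₂, ← hnm] at hmap
  have := congrArg (fun l => l[i]?) hmap
  simpa [List.getElem?_map, List.getElem?_range, hi] using this
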